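/- arXiv:2202.06808 — 3 statements merged into one kernel-verified Lean document; each statement's English description precedes it below -/
import Mathlib

section
/- Let A be a commutative ring and J an ideal with A/J ≅ k' a field. If A ≅ k'[t]/(t^n) is a truncated polynomial ring over a field k' that is algebraic over ℚ, then the module of relative Kähler differentials Ω¹_{A/ℤ} relative to k' (i.e., the kernel of Ω¹_{A/ℤ} → Ω¹_{k'/ℤ}) modulo d(J) is zero; more concretely, Ω¹_{(A,J)}/d(J) = 0 where J = (t) and Ω¹_{(A,J)} = ker(Ω¹_{A/ℤ} → Ω¹_{k'/ℤ}). -/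
open KaehlerDifferential
open Polynomial

/-- Any ring hom from a field algebraic over `ℚ` kills Kähler differentials over `ℤ`. -/
lemma aux_D_sigma_eq_zero (k' : Type*) [Field k'] [Algebra ℚ k'] [Algebra.IsAlgebraic ℚ k']
    (A : Type*) [CommRing A] (σ : k' →+* A) (c : k') :
    (KaehlerDifferential.D ℤ A) (σ c) = 0 := by
  -- c is algebraic over ℤ
  classical
  haveI : CharZero k' := charZero_of_injective_algebraMap (algebraMap ℚ k').injective
  have halg : IsAlgebraic ℤ c :=
    (IsFractionRing.isAlgebraic_iff ℤ ℚ k').mpr (Algebra.IsAlgebraic.isAlgebraic c)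
  obtain ⟨q0, hq0, hq0c⟩ := halg
  -- choose minimal degree annihilator
  have hex : ∃ m : ℕ, ∃ q : ℤ[X], q ≠ 0 ∧ Polynomial.aeval c q = 0 ∧ q.natDegree = m :=
    ⟨q0.natDegree, q0, hq0, hq0c, rfl⟩
  obtain ⟨q, hq, hqc, hqd⟩ := Nat.find_spec hex
  have hder : Polynomial.aeval c (derivative q) ≠ 0 := by
    intro h0
    have hdeg : q.natDegree ≠ 0 := by
      intro h
      obtain ⟨a, rfl⟩ := Polynomial.natDegree_eq_zero.mp h
      simp only [Polynomial.aeval_C] at hqc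
      have ha : a = 0 := by have := hqc; simp at this; exact_mod_cast this
      exact hq (by rw [ha, map_zero])
    have hd0 : derivative q ≠ 0 := by
      intro h
      have := Polynomial.natDegree_eq_zero_of_derivative_eq_zero h
      exact hdeg this
    have hlt : (derivative q).natDegree < Nat.find hex :=
      hqd ▸ Polynomial.natDegree_derivative_lt hdeg
    exact Nat.find_min hex hlt ⟨derivative q, hd0, h0, rfl⟩
  -- apply the derivation-polynomial identity
  have key : (KaehlerDifferential.D ℤ A) (Polynomial.aeval (σ c) q)
      = Polynomial.aeval (σ c) (derivative q) • (KaehlerDifferential.D ℤ A) (σ c) :=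
    Derivation.map_aeval _ _ _
  have h1 : (Polynomial.aeval (σ c) q : A) = σ (Polynomial.aeval c q) := by
    exact Polynomial.aeval_algHom_apply σ.toIntAlgHom c q
  have h2 : (Polynomial.aeval (σ c) (derivative q) : A) = σ (Polynomial.aeval c (derivative q)) := by
    exact Polynomial.aeval_algHom_apply σ.toIntAlgHom c (derivative q)
  rw [h1, hqc, map_zero, map_zero, h2] at key
  have := congrArg (fun z => σ ((Polynomial.aeval c (derivative q))⁻¹) • z) key.symm
  simpa [smul_smul, ← map_mul, inv_mul_cancel₀ hder] using this


lemma aux_main (k' : Type*) [Field k'] [Algebra ℚ k'] [Algebra.IsAlgebraic ℚ k']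
    (A : Type*) [CommRing A] (I : Ideal (Polynomial k'))
    (f : A →+* k') (e : A ≃+* (Polynomial k' ⧸ I))
    (he : (RingHom.ker f).map (e : A →+* _) =
      Ideal.span {Ideal.Quotient.mk I Polynomial.X}) :
    ∀ x : Ω[A⁄ℤ],
      x ∈ AddSubgroup.closure ((KaehlerDifferential.D ℤ A) '' (RingHom.ker f)) := by
  intro x
  haveI : CharZero k' := charZero_of_injective_algebraMap (algebraMap ℚ k').injective
  set τ : A := e.symm (Ideal.Quotient.mk I Polynomial.X) with hτdef
  set σ : k' →+* A :=
    (e.symm : (Polynomial k' ⧸ I) →+* A).comp (algebraMap k' (Polynomial k' ⧸ I)) with hσdef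
  -- τ lies in the augmentation ideal
  have hτ : τ ∈ RingHom.ker f := by
    have h1 : Ideal.Quotient.mk I Polynomial.X ∈
        (RingHom.ker f).map (e : A →+* (Polynomial k' ⧸ I)) := by
      rw [he]; exact Ideal.subset_span rfl
    obtain ⟨j, hj, hje⟩ := (Ideal.mem_map_iff_of_surjective _ e.surjective).mp h1
    have : τ = j := by rw [hτdef, ← hje]; exact e.symm_apply_apply j
    rwa [this]
  have hσD : ∀ c : k', (KaehlerDifferential.D ℤ A) (σ c) = 0 :=
    aux_D_sigma_eq_zero k' A σ
  -- membership of the basic monomial differentials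
  have hM : ∀ (c : k') (m : ℕ), (σ c * τ ^ m) • (KaehlerDifferential.D ℤ A) τ ∈
      AddSubgroup.closure ((KaehlerDifferential.D ℤ A) '' (RingHom.ker f)) := by
    intro c m
    have hm1 : ((m + 1 : ℕ) : k') ≠ 0 := Nat.cast_ne_zero.mpr (Nat.succ_ne_zero m)
    set c' : k' := c / ((m + 1 : ℕ) : k') with hc'
    have hy : σ c' * τ ^ (m + 1) ∈ RingHom.ker f :=
      Ideal.mul_mem_left _ _ (Ideal.pow_mem_of_mem _ hτ _ (Nat.succ_pos m))
    have hcc : σ c = σ c' * ((m + 1 : ℕ) : A) := by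
      rw [← map_natCast σ ((m+1 : ℕ)), ← map_mul, hc', div_mul_cancel₀ c hm1]
    have hEq : (σ c * τ ^ m) • (KaehlerDifferential.D ℤ A) τ
        = (KaehlerDifferential.D ℤ A) (σ c' * τ ^ (m + 1)) := by
      rw [Derivation.leibniz, hσD, smul_zero, add_zero, Derivation.leibniz_pow,
        Nat.succ_sub_one, ← Nat.cast_smul_eq_nsmul A, smul_smul, smul_smul, hcc]
    rw [hEq]
    exact AddSubgroup.subset_closure ⟨_, hy, rfl⟩
  -- every element of A comes from a polynomial
  have hrep : ∀ a : A, ∃ P : Polynomial k', e.symm (Ideal.Quotient.mk I P) = a := by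
    intro a
    obtain ⟨P, hP⟩ := Ideal.Quotient.mk_surjective (e a)
    exact ⟨P, by rw [hP]; exact e.symm_apply_apply a⟩
  have hmono : ∀ (m : ℕ) (c : k'),
      e.symm (Ideal.Quotient.mk I (Polynomial.monomial m c)) = σ c * τ ^ m := by
    intro m c
    have h1 : (Polynomial.monomial m c : Polynomial k') = Polynomial.C c * Polynomial.X ^ m :=
      (Polynomial.C_mul_X_pow_eq_monomial).symm
    have h2 : (algebraMap k' (Polynomial k' ⧸ I)) c = Ideal.Quotient.mk I (Polynomial.C c) := by
      rw [IsScalarTower.algebraMap_apply k' (Polynomial k') (Polynomial k' ⧸ I),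
        Polynomial.algebraMap_eq, Ideal.Quotient.algebraMap_eq]
    rw [h1, map_mul, map_pow, map_mul, map_pow, hσdef, RingHom.comp_apply, h2]
    rfl
  -- every multiple of D τ is in the closure
  have hA : ∀ a : A, a • (KaehlerDifferential.D ℤ A) τ ∈
      AddSubgroup.closure ((KaehlerDifferential.D ℤ A) '' (RingHom.ker f)) := by
    intro a
    obtain ⟨P, rfl⟩ := hrep a
    induction P using Polynomial.induction_on' with
    | add p q hp hq =>
      rw [map_add, map_add, add_smul]
      exact AddSubgroup.add_mem _ hp hq
    | monomial m c =>
      rw [hmono]; exact hM c m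
  -- every differential is a multiple of D τ
  have hE : ∀ b : A, ∃ w : A,
      (KaehlerDifferential.D ℤ A) b = w • (KaehlerDifferential.D ℤ A) τ := by
    intro b
    obtain ⟨P, rfl⟩ := hrep b
    induction P using Polynomial.induction_on' with
    | add p q hp hq =>
      obtain ⟨w1, hw1⟩ := hp
      obtain ⟨w2, hw2⟩ := hq
      exact ⟨w1 + w2, by rw [map_add, map_add, map_add, hw1, hw2, add_smul]⟩
    | monomial m c =>
      refine ⟨σ c * (((m : ℕ) : A) * τ ^ (m - 1)), ?_⟩
      rw [hmono, Derivation.leibniz, hσD, smul_zero, add_zero, Derivation.leibniz_pow,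
        ← Nat.cast_smul_eq_nsmul A, smul_smul, smul_smul, mul_assoc]
  have hE' : ∀ y : Ω[A⁄ℤ], ∃ w : A,
      y = w • (KaehlerDifferential.D ℤ A) τ := by
    intro y
    have hy : y ∈ Submodule.span A (Set.range (KaehlerDifferential.D ℤ A)) := by
      rw [KaehlerDifferential.span_range_derivation]; trivial
    induction hy using Submodule.span_induction with
    | mem z hz => obtain ⟨b, rfl⟩ := hz; exact hE b
    | zero => exact ⟨0, by rw [zero_smul]⟩
    | add u v _ _ hu hv =>
      obtain ⟨w1, rfl⟩ := hu
      obtain ⟨w2, rfl⟩ := hv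
      exact ⟨w1 + w2, by rw [add_smul]⟩
    | smul a u _ hu =>
      obtain ⟨w, rfl⟩ := hu
      exact ⟨a * w, by rw [mul_smul]⟩
  obtain ⟨w, rfl⟩ := hE' x
  exact hA w


/-- Let `k'` be a field algebraic over `ℚ`, and let `A` be a truncated
polynomial ring `k'[t]/(tⁿ)` with augmentation `f : A → k'` and augmentation
ideal `J = ker f = (t)`.  Then `Ω¹_{(A,J)}/d(J) = 0`: every element of the
kernel of `Ω¹_{A/ℤ} → Ω¹_{k'/ℤ}` lies in the subgroup generated by `d(J)`. -/
theorem stmt_0 (k' : Type*) [Field k'] [Algebra ℚ k'] [Algebra.IsAlgebraic ℚ k']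
    (A : Type*) [CommRing A] (n : ℕ) (hn : 1 ≤ n)
    (f : A →+* k') (hf : Function.Surjective f)
    (e : A ≃+* (Polynomial k' ⧸ Ideal.span {(Polynomial.X : Polynomial k') ^ n}))
    (he : (RingHom.ker f).map (e : A →+* _) =
      Ideal.span {Ideal.Quotient.mk (Ideal.span {(Polynomial.X : Polynomial k') ^ n})
        Polynomial.X}) :
    letI : Algebra A k' := f.toAlgebra
    haveI : IsScalarTower ℤ A k' := IsScalarTower.of_algebraMap_eq' (Subsingleton.elim _ _)
    ∀ x ∈ LinearMap.ker (KaehlerDifferential.map ℤ ℤ A k'),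
      x ∈ AddSubgroup.closure ((KaehlerDifferential.D ℤ A) '' (RingHom.ker f)) := by
  intro x _hx
  exact aux_main k' A _ f e he x
end

section
/- Let C be a reduced scheme which is the pushout (double) of a scheme C₀ along a closed subscheme E, i.e., C = C₀ ⊔_E C₀ with the two closed immersions ι± : C₀ → C. Given a rational function f on C₀ that is a unit in the semilocal ring O_{C₀,E} and satisfies f ≡ 1 on E_red, there exists a unit h in O_{C,E} with h|_{C₊} = f and h|_{C₋} = 1. -/
/-- Units on the double of a curve. Let `S = O_{C₀,E}` be the semilocal ring of
an (integral normal) curve `C₀` at a finite closed subscheme `E`, and let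
`π : S → T` be the (surjective) restriction map to `T = O(E_red)`.  The
semilocal ring `O_{C,E}` of the double `C = C₀ ⊔_{E_red} C₀` is the fiber
product `R = {(a, b) ∈ S × S : π a = π b}`.  Given a unit `f ∈ Sˣ` with
`f ≡ 1` on `E_red` (i.e. `π f = 1`), there is a unit `h ∈ Rˣ` with
`h|_{C₊} = f` and `h|_{C₋} = 1`. -/
theorem stmt_11 {S T : Type*} [CommRing S] [CommRing T]
    (π : S →+* T) (hπ : Function.Surjective π)
    (f : Sˣ) (hf : π (f : S) = 1) :
    ∃ h : (RingHom.eqLocus (π.comp (RingHom.fst S S)) (π.comp (RingHom.snd S S)))ˣ,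
      ((h : RingHom.eqLocus (π.comp (RingHom.fst S S))
          (π.comp (RingHom.snd S S))) : S × S).1 = (f : S) ∧
      ((h : RingHom.eqLocus (π.comp (RingHom.fst S S))
          (π.comp (RingHom.snd S S))) : S × S).2 = 1 := by
  have hfinv : π ((f⁻¹ : Sˣ) : S) = 1 := by
    have h1 := congrArg π (f.inv_mul)
    rw [map_mul, hf, mul_one, map_one] at h1
    exact h1
  refine ⟨⟨⟨((f : S), 1), show π _ = π _ by simp [hf]⟩,
    ⟨(((f⁻¹ : Sˣ) : S), 1), show π _ = π _ by simp [hfinv]⟩, ?_, ?_⟩, rfl, rfl⟩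
  · ext <;> simp
  · ext <;> simp
end

section
/- Let X be a Noetherian scheme of pure dimension 1 over a field, with irreducible components X₁, …, Xₙ, such that each scheme-theoretic intersection of two or more distinct components is either empty or a reduced 0-dimensional scheme, each component is smooth, and triple intersections are empty. Then for any irreducible component X₁, letting X₂ be the scheme-theoretic closure of X \ X₁ in X, the scheme X₂ is again such a normal crossing curve with one fewer component, and X₃ = X₁ ∩ X₂ is a 0-dimensional smooth scheme. -/
universe u

set_option maxHeartbeats 1000000


/-- A (affine model of a) normal crossing curve over a field `k`: a reduced
finite type `k`-algebra `A` of pure dimension `1` such that for every nonempty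
set `J` of irreducible components (minimal primes), the scheme-theoretic
intersection `A ⧸ ∑_{p ∈ J} p` is either empty (the zero ring) or smooth over
`k` of dimension `2 - |J|` (so components are smooth curves, pairwise
intersections are smooth `0`-dimensional, triple intersections are empty). -/
def IsNCCurve (k A : Type u) [Field k] [CommRing A] [Algebra k A] : Prop :=
  IsReduced A ∧
  (∀ p ∈ minimalPrimes A, ringKrullDim (A ⧸ p) = 1) ∧
  ∀ J : Finset (Ideal A), ↑J ⊆ minimalPrimes A → J.Nonempty →
    Subsingleton (A ⧸ (J.sup id)) ∨
      (Algebra.Smooth k (A ⧸ (J.sup id)) ∧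
        ringKrullDim (A ⧸ (J.sup id)) + (J.card : WithBot ℕ∞) = 2)

lemma aux_wb_eq_zero {d : WithBot (WithTop ℕ)} (h : d + 2 = 2) : d = 0 := by
  induction d using WithBot.recBotCoe with
  | bot => simp [WithBot.bot_add] at h
  | coe a =>
    rw [show ((2:WithBot (WithTop ℕ))) = ((2 : WithTop ℕ) : WithBot (WithTop ℕ)) from rfl] at h
    have ha : a + 2 = 2 := by exact_mod_cast h
    have : a = 0 := by
      have h2 : (2 : WithTop ℕ) ≠ ⊤ := by decide
      exact WithTop.add_right_cancel h2 (ha.trans (zero_add (2:WithTop ℕ)).symm)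
    simp [this]

lemma aux_wb_add_three {d : WithBot (WithTop ℕ)} (h0 : 0 ≤ d) : d + 3 ≠ 2 := by
  intro h
  induction d using WithBot.recBotCoe with
  | bot => simp at h0
  | coe a =>
    rw [show ((2:WithBot (WithTop ℕ))) = ((2 : WithTop ℕ) : WithBot (WithTop ℕ)) from rfl,
      show ((3:WithBot (WithTop ℕ))) = ((3 : WithTop ℕ) : WithBot (WithTop ℕ)) from rfl] at h
    have ha : a + 3 = 2 := by exact_mod_cast h
    have h3 : (3:WithTop ℕ) ≤ 2 := ha ▸ le_add_self
    exact (by decide : ¬ (3:WithTop ℕ) ≤ 2) h3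

lemma aux_sup_inf {A : Type u} [CommRing A] {I J K : Ideal A}
    (h : (I ⊔ J) ⊔ (I ⊔ K) = ⊤) : I ⊔ (J ⊓ K) = (I ⊔ J) ⊓ (I ⊔ K) := by
  refine le_antisymm (le_inf (sup_le_sup_left inf_le_left I) (sup_le_sup_left inf_le_right I)) ?_
  rw [← Ideal.mul_eq_inf_of_coprime h]
  rw [Ideal.sup_mul, Ideal.mul_sup, Ideal.mul_sup]
  refine sup_le (sup_le ?_ ?_) (sup_le ?_ ?_)
  · exact le_sup_of_le_left Ideal.mul_le_right
  · exact le_sup_of_le_left Ideal.mul_le_left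
  · exact le_sup_of_le_left Ideal.mul_le_right
  · exact le_sup_of_le_right Ideal.mul_le_inf

lemma aux_sup_finsetInf {A : Type u} [CommRing A] (I : Ideal A) (T : Finset (Ideal A))
    (h : ∀ p ∈ T, ∀ q ∈ T, p ≠ q → I ⊔ p ⊔ q = ⊤) :
    I ⊔ T.inf id = T.inf (fun p => I ⊔ p) := by
  classical
  induction T using Finset.induction_on with
  | empty => simp
  | @insert p T' hp IH =>
    rw [Finset.inf_insert, Finset.inf_insert, id]
    have hco : (I ⊔ p) ⊔ (I ⊔ T'.inf id) = ⊤ := by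
      by_contra hne
      obtain ⟨m, hm, hle⟩ := Ideal.exists_le_maximal _ hne
      have hinf : T'.inf id ≤ m := le_trans le_sup_right (le_trans le_sup_right hle)
      obtain ⟨q, hq, hqm⟩ := (hm.isPrime.inf_le').mp hinf
      have htop : I ⊔ p ⊔ q = ⊤ := by
        refine h p (Finset.mem_insert_self _ _) q (Finset.mem_insert_of_mem hq) ?_
        rintro rfl; exact hp hq
      refine hm.ne_top (top_le_iff.mp ?_)
      rw [← htop]
      have h1 : I ⊔ p ≤ m := le_sup_left.trans hle
      have h2 : q ≤ m := hqm
      exact sup_le h1 h2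
    rw [aux_sup_inf hco, IH (fun a ha b hb hab =>
      h a (Finset.mem_insert_of_mem ha) b (Finset.mem_insert_of_mem hb) hab)]

lemma aux_formallySmooth_of_subsingleton (R A : Type u) [CommRing R] [CommRing A]
    [Algebra R A] [Subsingleton A] : Algebra.FormallySmooth R A := by
  refine Algebra.FormallySmooth.of_comp_surjective ?_
  intro B _ _ I hI f
  have h1 : (0 : B ⧸ I) = 1 := by
    rw [← map_one f, Subsingleton.elim (1 : A) 0, map_zero]
  have hItop : I = ⊤ := Ideal.Quotient.zero_eq_one_iff.mp h1
  have hBsub : Subsingleton B := by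
    have h1 : (1 : B) ∈ I := hItop ▸ Submodule.mem_top
    have h2 : (1 : B) ∈ I * I := by simpa using Ideal.mul_mem_mul h1 h1
    rw [← pow_two, hI] at h2
    exact subsingleton_of_zero_eq_one (by simpa using h2.symm)
  refine ⟨{ toFun := fun _ => 0,
            map_one' := Subsingleton.elim _ _,
            map_mul' := fun _ _ => Subsingleton.elim _ _,
            map_zero' := rfl,
            map_add' := fun _ _ => Subsingleton.elim _ _,
            commutes' := fun _ => Subsingleton.elim _ _ }, ?_⟩
  have : Subsingleton (B ⧸ I) := subsingleton_of_zero_eq_one h1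
  ext x
  exact Subsingleton.elim _ _

lemma aux_dim_le_zero {R : Type u} [CommRing R]
    (h : ∀ P Q : PrimeSpectrum R, ¬ P < Q) : ringKrullDim R ≤ 0 := by
  rw [ringKrullDim, Order.krullDim]
  refine iSup_le fun p => ?_
  have hl : p.length = 0 := by
    by_contra hl
    exact h _ _ (p.step ⟨0, Nat.pos_of_ne_zero hl⟩)
  simp [hl]

lemma aux_no_chain {A : Type u} [CommRing A] (I : Ideal A)
    (hdim : ringKrullDim (A ⧸ I) = 0) {P Q : Ideal A} (hP : P.IsPrime) (hQ : Q.IsPrime)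
    (hIP : I ≤ P) (hPQ : P < Q) : False := by
  have hIQ : I ≤ Q := hIP.trans hPQ.le
  have hker : RingHom.ker (Ideal.Quotient.mk I) = I := Ideal.mk_ker
  have hsur : Function.Surjective (Ideal.Quotient.mk I) := Ideal.Quotient.mk_surjective
  haveI hP' : (P.map (Ideal.Quotient.mk I)).IsPrime :=
    Ideal.map_isPrime_of_surjective hsur (by rwa [hker])
  haveI hQ' : (Q.map (Ideal.Quotient.mk I)).IsPrime :=
    Ideal.map_isPrime_of_surjective hsur (by rwa [hker])
  set P' : PrimeSpectrum (A ⧸ I) := ⟨P.map (Ideal.Quotient.mk I), hP'⟩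
  set Q' : PrimeSpectrum (A ⧸ I) := ⟨Q.map (Ideal.Quotient.mk I), hQ'⟩
  have hcomap : ∀ (J : Ideal A), I ≤ J →
      (J.map (Ideal.Quotient.mk I)).comap (Ideal.Quotient.mk I) = J := by
    intro J hJ
    rw [Ideal.comap_map_of_surjective _ hsur, ← RingHom.ker_eq_comap_bot, hker,
      sup_eq_left.mpr hJ]
  have hlt : P' < Q' := by
    refine lt_of_le_of_ne (Ideal.map_mono hPQ.le) ?_
    intro he
    have : P = Q := by
      have := congrArg (fun x : PrimeSpectrum (A ⧸ I) =>
        x.asIdeal.comap (Ideal.Quotient.mk I)) he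
      simpa [P', Q', hcomap P hIP, hcomap Q hIQ] using this
    exact hPQ.ne this
  have hh := Order.height_le_krullDim Q'
  have hdim' : Order.krullDim (PrimeSpectrum (A ⧸ I)) = 0 := hdim
  rw [hdim'] at hh
  have hh0 : Order.height Q' = 0 := by
    exact le_antisymm (by exact_mod_cast hh) zero_le
  exact lt_irrefl _ (hlt.trans_le (Order.height_eq_zero.mp hh0 hlt.le))

/-- Let `A` be a normal crossing curve over `k` (Noetherian, of finite type),
let `p₁` be an irreducible component, and let `X₂ = A ⧸ ⋂_{p ≠ p₁} p` be the
scheme-theoretic closure of the complement of the component `X₁ = A ⧸ p₁`.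
Then `X₂` is again a normal crossing curve whose components are the remaining
components (one fewer), and `X₃ = X₁ ∩ X₂ = A ⧸ (p₁ + ⋂_{p ≠ p₁} p)` is a
`0`-dimensional smooth `k`-scheme (possibly empty). -/
theorem stmt_15 (k A : Type u) [Field k] [CommRing A] [Algebra k A]
    [IsNoetherianRing A] [Algebra.FiniteType k A]
    (hA : IsNCCurve k A)
    (p₁ : Ideal A) (hp₁ : p₁ ∈ minimalPrimes A)
    (hn : (minimalPrimes A \ {p₁}).Nonempty) :
    IsNCCurve k (A ⧸ sInf (minimalPrimes A \ {p₁})) ∧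
    Nonempty (↥(minimalPrimes (A ⧸ sInf (minimalPrimes A \ {p₁}))) ≃
      ↥(minimalPrimes A \ {p₁})) ∧
    (Subsingleton (A ⧸ (p₁ ⊔ sInf (minimalPrimes A \ {p₁}))) ∨
      (Algebra.Smooth k (A ⧸ (p₁ ⊔ sInf (minimalPrimes A \ {p₁}))) ∧
        ringKrullDim (A ⧸ (p₁ ⊔ sInf (minimalPrimes A \ {p₁}))) = 0)) := by
  classical
  obtain ⟨hred, hdim1, hJ⟩ := hA
  set S : Set (Ideal A) := minimalPrimes A \ {p₁} with hS
  set q : Ideal A := sInf S with hq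
  have hSfin : S.Finite := (minimalPrimes.finite_of_isNoetherianRing A).subset Set.diff_subset
  set T : Finset (Ideal A) := hSfin.toFinset with hT
  have hTS : (T : Set (Ideal A)) = S := hSfin.coe_toFinset
  have hmemT : ∀ p : Ideal A, p ∈ T ↔ p ∈ S := fun p => hSfin.mem_toFinset
  have hqT : q = T.inf id := by rw [hq, ← hTS, ← Finset.inf_id_eq_sInf]
  have hSsub : S ⊆ minimalPrimes A := Set.diff_subset
  have hSprime : ∀ p ∈ S, p.IsPrime := fun p hp => hp.1.1.1
  have hqle : ∀ p ∈ S, q ≤ p := fun p hp => sInf_le hp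
  have hexists : ∀ r : Ideal A, r.IsPrime → q ≤ r → ∃ p ∈ S, p ≤ r := by
    intro r hr hqr
    rw [hqT] at hqr
    obtain ⟨p, hp, hpr⟩ := hr.inf_le'.mp hqr
    exact ⟨p, (hmemT p).mp hp, hpr⟩
  have hminA : ∀ p ∈ minimalPrimes A, ∀ r : Ideal A, r.IsPrime → r ≤ p → r = p := by
    intro p hp r hr hrp
    exact le_antisymm hrp (hp.2 ⟨hr, bot_le⟩ hrp)
  have hne₁ : ∀ p ∈ S, p₁ ≠ p := by
    rintro p hp rfl
    exact hp.2 rfl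
  -- pairwise intersections
  have hpair : ∀ p ∈ S, Subsingleton (A ⧸ (p₁ ⊔ p)) ∨
      (Algebra.Smooth k (A ⧸ (p₁ ⊔ p)) ∧ ringKrullDim (A ⧸ (p₁ ⊔ p)) = 0) := by
    intro p hp
    set J : Finset (Ideal A) := {p₁, p} with hJdef
    have hne : p₁ ≠ p := hne₁ p hp
    have hsup : J.sup id = p₁ ⊔ p := by simp [hJdef]
    have hcard : J.card = 2 := by
      rw [hJdef, Finset.card_insert_of_notMem (by simp [hne]), Finset.card_singleton]
    have hsub : (J : Set (Ideal A)) ⊆ minimalPrimes A := by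
      intro x hx
      simp only [hJdef, Finset.coe_insert, Finset.coe_singleton, Set.mem_insert_iff,
        Set.mem_singleton_iff] at hx
      rcases hx with rfl | rfl
      · exact hp₁
      · exact hSsub hp
    rcases hJ J hsub ⟨p₁, by simp [hJdef]⟩ with h | ⟨hs, hd⟩
    · rw [hsup] at h
      exact Or.inl h
    · rw [hsup] at hs hd
      right
      refine ⟨hs, aux_wb_eq_zero ?_⟩
      rw [hcard] at hd
      push_cast at hd ⊢
      exact hd
  -- triple intersections are empty
  have htriple : ∀ p ∈ S, ∀ p' ∈ S, p ≠ p' → p₁ ⊔ p ⊔ p' = ⊤ := by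
    intro p hp p' hp' hnepp
    set J : Finset (Ideal A) := {p₁, p, p'} with hJdef
    have h1 : p₁ ≠ p := hne₁ p hp
    have h2 : p₁ ≠ p' := hne₁ p' hp'
    have hsup : J.sup id = p₁ ⊔ p ⊔ p' := by simp [hJdef, sup_assoc]
    have hcard : J.card = 3 := by
      rw [hJdef, Finset.card_insert_of_notMem (by simp [h1, h2]),
        Finset.card_insert_of_notMem (by simp [hnepp]), Finset.card_singleton]
    have hsub : (J : Set (Ideal A)) ⊆ minimalPrimes A := by
      intro x hx
      simp only [hJdef, Finset.coe_insert, Finset.coe_singleton, Set.mem_insert_iff,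
        Set.mem_singleton_iff] at hx
      rcases hx with rfl | rfl | rfl
      · exact hp₁
      · exact hSsub hp
      · exact hSsub hp'
    have key : Subsingleton (A ⧸ J.sup id) → p₁ ⊔ p ⊔ p' = ⊤ := by
      intro h
      rw [← hsup]
      exact Ideal.Quotient.subsingleton_iff.mp h
    rcases hJ J hsub ⟨p₁, by simp [hJdef]⟩ with h | ⟨_, hd⟩
    · exact key h
    · by_cases hsub2 : Subsingleton (A ⧸ J.sup id)
      · exact key hsub2
      · exfalso
        haveI : Nontrivial (A ⧸ J.sup id) := not_subsingleton_iff_nontrivial.mp hsub2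
        have h0 : (0 : WithBot (WithTop ℕ)) ≤ ringKrullDim (A ⧸ J.sup id) :=
          ringKrullDim_nonneg_of_nontrivial (R := A ⧸ J.sup id)
        refine aux_wb_add_three h0 ?_
        rw [hcard] at hd
        push_cast at hd ⊢
        exact hd
  -- minimal primes over q are exactly S
  have lemS : q.minimalPrimes = S := by
    ext r
    constructor
    · rintro ⟨⟨hr, hqr⟩, hmin⟩
      obtain ⟨p, hpS, hpr⟩ := hexists r hr hqr
      have h1 : r ≤ p := hmin ⟨hSprime p hpS, hqle p hpS⟩ hpr
      have : r = p := le_antisymm h1 hpr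
      exact this ▸ hpS
    · intro hrS
      refine ⟨⟨hSprime r hrS, hqle r hrS⟩, ?_⟩
      intro y hy hyr
      obtain ⟨p, hpS, hpy⟩ := hexists y hy.1 hy.2
      have : p = r := hminA r (hSsub hrS) p (hSprime p hpS) (hpy.trans hyr)
      exact this ▸ hpy
  -- q is radical, so A ⧸ q is reduced
  have hrad : q.IsRadical := by
    have h1 : q.radical = q := by
      rw [← Ideal.sInf_minimalPrimes, lemS]
    exact h1.le
  haveI hBred : IsReduced (A ⧸ q) := (Ideal.isRadical_iff_quotient_reduced q).mp hrad
  have hsurq : Function.Surjective (Ideal.Quotient.mk q) := Ideal.Quotient.mk_surjective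
  have hinj : Function.Injective (Ideal.comap (Ideal.Quotient.mk q) :
      Ideal (A ⧸ q) → Ideal A) := by
    intro X Y h
    rw [← Ideal.map_comap_of_surjective _ hsurq X, ← Ideal.map_comap_of_surjective _ hsurq Y, h]
  have hcomap_eq : Ideal.comap (Ideal.Quotient.mk q) '' minimalPrimes (A ⧸ q) = S := by
    rw [← lemS]
    have h1 := Ideal.comap_minimalPrimes_eq_of_surjective hsurq (⊥ : Ideal (A ⧸ q))
    rw [← RingHom.ker_eq_comap_bot, Ideal.mk_ker] at h1
    exact h1.symm
  have hcomapS : ∀ P ∈ minimalPrimes (A ⧸ q), P.comap (Ideal.Quotient.mk q) ∈ S := by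
    intro P hP
    exact hcomap_eq ▸ ⟨P, hP, rfl⟩
  -- dimension of components of A ⧸ q
  have hcomp : ∀ P ∈ minimalPrimes (A ⧸ q), ringKrullDim ((A ⧸ q) ⧸ P) = 1 := by
    intro P hP
    have hPc : P.comap (Ideal.Quotient.mk q) ∈ S := hcomapS P hP
    have hsur2 : Function.Surjective ((Ideal.Quotient.mk P).comp (Ideal.Quotient.mk q)) :=
      Ideal.Quotient.mk_surjective.comp hsurq
    have hker2 : RingHom.ker ((Ideal.Quotient.mk P).comp (Ideal.Quotient.mk q)) =
        P.comap (Ideal.Quotient.mk q) := by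
      rw [← RingHom.comap_ker, Ideal.mk_ker]
    have e := RingHom.quotientKerEquivOfSurjective hsur2
    have h2 := ringKrullDim_eq_of_ringEquiv e
    rw [hker2] at h2
    rw [← h2]
    exact hdim1 _ (hSsub hPc)
  -- the J-condition for A ⧸ q
  have hJB : ∀ J : Finset (Ideal (A ⧸ q)), ↑J ⊆ minimalPrimes (A ⧸ q) → J.Nonempty →
      Subsingleton ((A ⧸ q) ⧸ (J.sup id)) ∨
        (Algebra.Smooth k ((A ⧸ q) ⧸ (J.sup id)) ∧
          ringKrullDim ((A ⧸ q) ⧸ (J.sup id)) + (J.card : WithBot ℕ∞) = 2) := by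
    intro J hJsub hJne
    set J'' : Finset (Ideal A) := J.image (Ideal.comap (Ideal.Quotient.mk q)) with hJ''def
    have hJ''sub : (J'' : Set (Ideal A)) ⊆ minimalPrimes A := by
      intro x hx
      rw [hJ''def, Finset.coe_image] at hx
      obtain ⟨P, hPJ, rfl⟩ := hx
      exact hSsub (hcomapS P (hJsub hPJ))
    have hJ''ne : J''.Nonempty := hJne.image _
    have hcard : J''.card = J.card := Finset.card_image_of_injective _ hinj
    have hsup : Ideal.map (Ideal.Quotient.mk q) (J''.sup id) = J.sup id := by
      rw [hJ''def, Finset.sup_image,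
        Finset.comp_sup_eq_sup_comp (Ideal.map (Ideal.Quotient.mk q))
          (fun a b => Ideal.map_sup _ _ _) (Ideal.map_bot)]
      exact Finset.sup_congr rfl fun P hP => Ideal.map_comap_of_surjective _ hsurq P
    have hqle'' : q ≤ J''.sup id := by
      obtain ⟨P, hPJ⟩ := hJne
      have hmem : P.comap (Ideal.Quotient.mk q) ∈ J'' := by
        rw [hJ''def]; exact Finset.mem_image_of_mem _ hPJ
      exact le_trans (hqle _ (hcomapS P (hJsub hPJ))) (Finset.le_sup (f := id) hmem)
    set f : A →ₐ[k] ((A ⧸ q) ⧸ (J.sup id)) :=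
      (Ideal.Quotient.mkₐ k (J.sup id)).comp (Ideal.Quotient.mkₐ k q) with hfdef
    have hsurf : Function.Surjective f := by
      intro x
      obtain ⟨y, rfl⟩ := Ideal.Quotient.mk_surjective x
      obtain ⟨z, rfl⟩ := hsurq y
      exact ⟨z, rfl⟩
    have hker3 : RingHom.ker f = J''.sup id := by
      have : RingHom.ker f =
          (J.sup id).comap (Ideal.Quotient.mk q) := by
        rw [hfdef]
        show RingHom.ker ((Ideal.Quotient.mk (J.sup id)).comp (Ideal.Quotient.mk q)) = _
        rw [← RingHom.comap_ker, Ideal.mk_ker]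
      rw [this, ← hsup, Ideal.comap_map_of_surjective _ hsurq, ← RingHom.ker_eq_comap_bot,
        Ideal.mk_ker, sup_eq_left.mpr hqle'']
    have E : (A ⧸ J''.sup id) ≃ₐ[k] ((A ⧸ q) ⧸ (J.sup id)) :=
      (Ideal.quotientEquivAlgOfEq k hker3.symm).trans
        (Ideal.quotientKerAlgEquivOfSurjective hsurf)
    rcases hJ J'' hJ''sub hJ''ne with h | ⟨hs, hd⟩
    · left
      exact E.symm.toEquiv.subsingleton
    · right
      haveI := hs
      refine ⟨Algebra.Smooth.of_equiv E, ?_⟩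
      rw [← ringKrullDim_eq_of_ringEquiv E.toRingEquiv, ← hcard]
      exact hd
  -- CRT decomposition of p₁ ⊔ q
  have hco_pair : ∀ p ∈ T, ∀ p' ∈ T, p ≠ p' → p₁ ⊔ p ⊔ p' = ⊤ := by
    intro p hp p' hp' h
    exact htriple p ((hmemT p).mp hp) p' ((hmemT p').mp hp') h
  have hsupinf : p₁ ⊔ q = T.inf (fun p => p₁ ⊔ p) := by
    rw [hqT]; exact aux_sup_finsetInf p₁ T hco_pair
  have hiInf : p₁ ⊔ q = ⨅ i : {x // x ∈ T}, (p₁ ⊔ i.1) := by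
    rw [hsupinf]
    refine le_antisymm (le_iInf fun i => Finset.inf_le i.2)
      (Finset.le_inf fun p hp => iInf_le (fun i : {x // x ∈ T} => p₁ ⊔ i.1) ⟨p, hp⟩)
  have hcop : Pairwise (Function.onFun IsCoprime fun i : {x // x ∈ T} => p₁ ⊔ i.1) := by
    intro i j hij
    have hnij : i.1 ≠ j.1 := fun h => hij (Subtype.ext h)
    have : (p₁ ⊔ i.1) ⊔ (p₁ ⊔ j.1) = ⊤ := by
      rw [sup_sup_sup_comm, sup_idem, ← sup_assoc]
      exact hco_pair i.1 i.2 j.1 j.2 hnij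
    exact Ideal.isCoprime_iff_sup_eq.mpr this
  have eAlg : (A ⧸ (p₁ ⊔ q)) ≃ₐ[k] ∀ i : {x // x ∈ T}, A ⧸ (p₁ ⊔ i.1) := by
    refine AlgEquiv.ofRingEquiv
      (f := (Ideal.quotEquivOfEq hiInf).trans
        (Ideal.quotientInfRingEquivPiQuotient _ hcop)) ?_
    intro x
    rw [RingEquiv.trans_apply, ← Ideal.Quotient.mk_algebraMap, Ideal.quotEquivOfEq_mk]
    have h2 : (Ideal.quotientInfRingEquivPiQuotient (fun i : {x // x ∈ T} => p₁ ⊔ i.1) hcop)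
        (Ideal.Quotient.mk _ (algebraMap k A x)) =
        fun i : {x // x ∈ T} => Ideal.Quotient.mk (p₁ ⊔ i.1) (algebraMap k A x) :=
      Ideal.quotientInfToPiQuotient_mk _ _
    rw [h2]
    funext i
    rfl
  -- final assembly
  refine ⟨⟨hBred, hcomp, hJB⟩,
    ⟨(Equiv.Set.image _ _ hinj).trans (Equiv.setCongr hcomap_eq)⟩, ?_⟩
  by_cases hX3 : Subsingleton (A ⧸ (p₁ ⊔ q))
  · exact Or.inl hX3
  right
  have hFS : ∀ i : {x // x ∈ T}, Algebra.FormallySmooth k (A ⧸ (p₁ ⊔ i.1)) := by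
    intro i
    rcases hpair i.1 ((hmemT i.1).mp i.2) with h | h
    · haveI := h
      exact aux_formallySmooth_of_subsingleton k _
    · exact h.1.formallySmooth
  haveI hFSpi : Algebra.FormallySmooth k (∀ i : {x // x ∈ T}, A ⧸ (p₁ ⊔ i.1)) :=
    (Algebra.FormallySmooth.pi_iff _).mpr hFS
  haveI hFT : Algebra.FiniteType k (A ⧸ (p₁ ⊔ q)) := inferInstance
  constructor
  · refine ⟨Algebra.FormallySmooth.of_equiv eAlg.symm, ?_⟩
    exact Algebra.FinitePresentation.of_finiteType.mp hFT
  · haveI : Nontrivial (A ⧸ (p₁ ⊔ q)) := not_subsingleton_iff_nontrivial.mp hX3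
    refine le_antisymm (aux_dim_le_zero ?_)
      (ringKrullDim_nonneg_of_nontrivial (R := A ⧸ (p₁ ⊔ q)))
    intro P Q hlt
    set P' := P.asIdeal.comap (Ideal.Quotient.mk (p₁ ⊔ q)) with hP'def
    set Q' := Q.asIdeal.comap (Ideal.Quotient.mk (p₁ ⊔ q)) with hQ'def
    haveI hP'p : P'.IsPrime := Ideal.IsPrime.comap _
    haveI hQ'p : Q'.IsPrime := Ideal.IsPrime.comap _
    have hleP : p₁ ⊔ q ≤ P' := by
      rw [hP'def]
      intro x hx
      simp only [Ideal.mem_comap]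
      rw [Ideal.Quotient.eq_zero_iff_mem.mpr hx]
      exact (P.asIdeal).zero_mem
    have hle' : P.asIdeal ≤ Q.asIdeal := hlt.le
    have hltPQ : P' < Q' := by
      refine lt_of_le_of_ne (Ideal.comap_mono hle') ?_
      intro h
      have heq : P.asIdeal = Q.asIdeal := by
        rw [← Ideal.map_comap_of_surjective _ Ideal.Quotient.mk_surjective P.asIdeal,
          ← Ideal.map_comap_of_surjective _ Ideal.Quotient.mk_surjective Q.asIdeal]
        exact congrArg _ h
      exact hlt.ne (PrimeSpectrum.ext heq)
    have hq' : q ≤ P' := le_trans le_sup_right hleP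
    obtain ⟨p, hpS, hpP⟩ := hexists P' hP'p hq'
    rcases hpair p hpS with h | h
    · have htop : p₁ ⊔ p = ⊤ := Ideal.Quotient.subsingleton_iff.mp h
      exact hP'p.ne_top (top_le_iff.mp
        (htop ▸ sup_le (le_trans le_sup_left hleP) hpP))
    · exact aux_no_chain (p₁ ⊔ p) h.2 hP'p hQ'p
        (sup_le (le_trans le_sup_left hleP) hpP) hltPQ
end
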